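/- In the family of strings T_0 = "0", T_i = T_{i-1} · c_i · T_{i-1} (c_i fresh characters), the number of distinct maximal repeats of T_i (with a sentinel appended) is O(i), i.e., grows linearly in i while |T_i| grows exponentially. Concretely, the maximal repeats of T_i# are exactly the strings T_j for 0 ≤ j < i together with the empty string. -/

import Mathlib

/-- Number of occurrences (starting positions) of `W` in `T`; positions range over
`0..T.length` so that the empty string is counted `T.length + 1` times. -/
def numOcc {α : Type*} [DecidableEq α] (W T : List α) : ℕ :=
  (List.range (T.length + 1)).countP (fun p => decide (W <+: T.drop p))

/-- The set of left extensions of `W` in `T`, with `none` acting as a sentinel extension for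
an occurrence of `W` at the very beginning of `T`. -/
def leftExts {α : Type*} (W T : List α) : Set (Option α) :=
  {o | o.elim (W <+: T) (fun a => (a :: W) <:+: T)}

/-- The set of right extensions of `W` in `T`, with `none` acting as a sentinel extension for
an occurrence of `W` at the very end of `T`. -/
def rightExts {α : Type*} (W T : List α) : Set (Option α) :=
  {o | o.elim (W <:+ T) (fun b => (W ++ [b]) <:+: T)}

/-- `W` has at least two distinct left extensions in `T`. -/
def LeftMaximal {α : Type*} (W T : List α) : Prop :=
  ∃ x ∈ leftExts W T, ∃ y ∈ leftExts W T, x ≠ y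

/-- `W` has at least two distinct right extensions in `T`. -/
def RightMaximal {α : Type*} (W T : List α) : Prop :=
  ∃ x ∈ rightExts W T, ∃ y ∈ rightExts W T, x ≠ y

/-- `W` is a maximal repeat of `T`: a substring occurring more than once that is both
left-maximal and right-maximal. -/
def MaximalRepeat {α : Type*} [DecidableEq α] (W T : List α) : Prop :=
  W <:+: T ∧ 2 ≤ numOcc W T ∧ LeftMaximal W T ∧ RightMaximal W T

/-- The set of ending positions of the occurrences of `U` in `T`. -/
def endSet {α : Type*} (U T : List α) : Set ℕ :=
  {j | ∃ p, p + U.length = j ∧ j ≤ T.length ∧ U <+: T.drop p}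


private lemma v2_eq {x k : ℕ} (h1 : 2^k ∣ x) (h2 : ¬ 2^(k+1) ∣ x) : padicValNat 2 x = k := by
  have hx : x ≠ 0 := by rintro rfl; exact h2 (dvd_zero _)
  rcases lt_trichotomy (padicValNat 2 x) k with h | h | h
  · exact absurd (dvd_trans (pow_dvd_pow 2 h) h1) (pow_succ_padicValNat_not_dvd hx)
  · exact h
  · exact absurd (dvd_trans (pow_dvd_pow 2 h) pow_padicValNat_dvd) h2

private lemma v2_not_dvd {x : ℕ} (hx : x ≠ 0) : ¬ 2 ^ (padicValNat 2 x + 1) ∣ x :=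
  pow_succ_padicValNat_not_dvd hx

private lemma v2_le {x k : ℕ} (h0 : 0 < x) (h : x < 2^(k+1)) : padicValNat 2 x ≤ k := by
  by_contra hc
  push_neg at hc
  have hd : 2^(k+1) ∣ x := dvd_trans (pow_dvd_pow 2 hc) pow_padicValNat_dvd
  have := Nat.le_of_dvd h0 hd
  omega

private lemma v2_add {M x : ℕ} (h0 : 0 < x) (h : 2 ^ (padicValNat 2 x + 1) ∣ M) :
    padicValNat 2 (M + x) = padicValNat 2 x := by
  apply v2_eq
  · exact Nat.dvd_add (dvd_trans (pow_dvd_pow 2 (Nat.le_succ _)) h) pow_padicValNat_dvd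
  · intro hd
    exact v2_not_dvd h0.ne' ((Nat.dvd_add_right h).mp hd)

private lemma v2_mod {x k : ℕ} (h0 : 0 < x) (h : padicValNat 2 x = k) : x % 2^(k+1) = 2^k := by
  have h1 : 2^k ∣ x := h ▸ pow_padicValNat_dvd
  have h2 : ¬ 2^(k+1) ∣ x := h ▸ v2_not_dvd h0.ne'
  have hd : 2^k ∣ x % 2^(k+1) :=
    (Nat.dvd_mod_iff (pow_dvd_pow 2 (Nat.le_succ _))).mpr h1
  have hlt : x % 2^(k+1) < 2^(k+1) := Nat.mod_lt _ (by positivity)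
  have hne : x % 2^(k+1) ≠ 0 := by
    intro hz
    exact h2 (Nat.dvd_of_mod_eq_zero hz)
  obtain ⟨u, hu⟩ := hd
  have hp : (0:ℕ) < 2^k := by positivity
  have hu2 : u < 2 := by
    by_contra hc
    push_neg at hc
    have : 2^k * 2 ≤ 2^k * u := Nat.mul_le_mul_left _ hc
    rw [← pow_succ] at this
    omega
  interval_cases u <;> omega

private lemma v2_of_mod {x k : ℕ} (h0 : 0 < x % 2^(k+1)) :
    padicValNat 2 x = padicValNat 2 (x % 2^(k+1)) := by
  conv_lhs => rw [← Nat.div_add_mod x (2^(k+1))]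
  refine v2_add h0 ?_
  refine dvd_trans (pow_dvd_pow 2 ?_) (dvd_mul_right (2^(k+1)) _)
  have hle : padicValNat 2 (x % 2^(k+1)) ≤ k := v2_le h0 (Nat.mod_lt _ (by positivity))
  omega

private lemma two_le_countP {p : ℕ → Bool} {n a b : ℕ} (hab : a ≠ b) (ha : a < n) (hb : b < n)
    (hpa : p a = true) (hpb : p b = true) : 2 ≤ (List.range n).countP p := by
  classical
  rw [List.countP_eq_length_filter]
  have hnd : ((List.range n).filter p).Nodup := (List.nodup_range (n := n)).filter p
  have ha' : a ∈ (List.range n).filter p := List.mem_filter.mpr ⟨List.mem_range.mpr ha, hpa⟩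
  have hb' : b ∈ (List.range n).filter p := List.mem_filter.mpr ⟨List.mem_range.mpr hb, hpb⟩
  have hcard := List.toFinset_card_of_nodup hnd
  have hsub : ({a, b} : Finset ℕ) ⊆ ((List.range n).filter p).toFinset := by
    intro x hx
    rcases Finset.mem_insert.mp hx with rfl | hx
    · exact List.mem_toFinset.mpr ha'
    · rw [Finset.mem_singleton] at hx
      subst hx
      exact List.mem_toFinset.mpr hb'
  have h2 : ({a, b} : Finset ℕ).card = 2 := Finset.card_pair hab
  have := Finset.card_le_card hsub
  omega

private lemma exists_two_of_two_le_countP {p : ℕ → Bool} {n : ℕ}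
    (h : 2 ≤ (List.range n).countP p) :
    ∃ a b : ℕ, a ≠ b ∧ p a = true ∧ p b = true := by
  rw [List.countP_eq_length_filter] at h
  set l := (List.range n).filter p with hl
  have hnd : l.Nodup := List.Nodup.filter _ (List.nodup_range (n := n))
  have h0 : 0 < l.length := by omega
  have h1 : 1 < l.length := h
  refine ⟨l[0], l[1], ?_, ?_, ?_⟩
  · intro he
    have : (0:ℕ) = 1 := (List.Nodup.getElem_inj_iff hnd (hi := h0) (hj := h1)).mp he
    omega
  · have hm : l[0] ∈ l := List.getElem_mem h0
    exact (List.mem_filter.mp hm).2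
  · have hm : l[1] ∈ l := List.getElem_mem h1
    exact (List.mem_filter.mp hm).2


private def gg (c : ℕ → ℕ) (sent i : ℕ) (k : ℕ) : ℕ :=
  if k = 0 then 0 else if k ≤ i then c k else sent

section fam
variable {c : ℕ → ℕ} {f : ℕ → List ℕ} {sent i : ℕ}

private lemma flen (h0 : f 0 = [0]) (hrec : ∀ j, f (j + 1) = f j ++ [c (j + 1)] ++ f j) :
    ∀ j, (f j).length = 2^(j+1) - 1 := by
  intro j
  induction j with
  | zero => simp [h0]
  | succ j ih =>
    rw [hrec j]
    simp only [List.length_append, List.length_cons, List.length_nil, ih]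
    have : (2:ℕ)^(j+1+1) = 2 * 2^(j+1) := by ring
    have h2 : (1:ℕ) ≤ 2^(j+1) := Nat.one_le_two_pow
    omega

private lemma f_prefix (hrec : ∀ j, f (j + 1) = f j ++ [c (j + 1)] ++ f j) :
    ∀ j k, j ≤ k → f j <+: f k := by
  intro j k hjk
  induction k with
  | zero =>
    have : j = 0 := by omega
    subst this; exact List.prefix_refl _
  | succ k ih =>
    rcases Nat.lt_or_ge j (k+1) with h | h
    · refine (ih (by omega)).trans ?_
      rw [hrec k, List.append_assoc]
      exact List.prefix_append _ _
    · have : j = k+1 := by omega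
      subst this; exact List.prefix_refl _

private lemma f_suffix (hrec : ∀ j, f (j + 1) = f j ++ [c (j + 1)] ++ f j) :
    ∀ j k, j ≤ k → f j <:+ f k := by
  intro j k hjk
  induction k with
  | zero =>
    have : j = 0 := by omega
    subst this; exact List.suffix_refl _
  | succ k ih =>
    rcases Nat.lt_or_ge j (k+1) with h | h
    · refine (ih (by omega)).trans ?_
      rw [hrec k]
      exact List.suffix_append _ _
    · have : j = k+1 := by omega
      subst this; exact List.suffix_refl _

private lemma fclosed (h0 : f 0 = [0]) (hrec : ∀ j, f (j + 1) = f j ++ [c (j + 1)] ++ f j) :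
    ∀ j, j ≤ i →
      f j = (List.range (2^(j+1)-1)).map (fun t => gg c sent i (padicValNat 2 (t+1))) := by
  intro j
  induction j with
  | zero =>
    intro _
    simp [h0, gg, List.range_succ]
  | succ j ih =>
    intro hj
    have hj' : j ≤ i := by omega
    have hP : (1:ℕ) ≤ 2^(j+1) := Nat.one_le_two_pow
    have hsplit : 2^(j+1+1) - 1 = ((2^(j+1)-1) + 1) + (2^(j+1) - 1) := by
      have : (2:ℕ)^(j+1+1) = 2 * 2^(j+1) := by ring
      omega
    rw [hrec j, ih hj', hsplit, List.range_add, List.range_succ, List.map_append,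
      List.map_append, List.map_map]
    congr 1
    · congr 1
      simp only [List.map_cons, List.map_nil]
      congr 1
      have harg : (2^(j+1)-1) + 1 = 2^(j+1) := by omega
      rw [harg]
      have hv : padicValNat 2 (2^(j+1)) = j+1 := by
        apply v2_eq dvd_rfl
        intro hd
        have h1 := Nat.le_of_dvd (by positivity) hd
        have h2 : (2:ℕ)^(j+1) < 2^(j+1+1) := Nat.pow_lt_pow_right (by norm_num) (by omega)
        omega
      rw [hv]
      simp only [gg]
      rw [if_neg (by omega), if_pos (by omega)]
    · apply List.map_congr_left
      intro t ht
      rw [List.mem_range] at ht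
      simp only [Function.comp]
      congr 1
      have harg : (2^(j+1)-1) + 1 + t + 1 = 2^(j+1) + (t+1) := by omega
      rw [harg]
      have hle : padicValNat 2 (t+1) ≤ j := v2_le (by omega) (by omega)
      exact (v2_add (by omega) (pow_dvd_pow 2 (by omega))).symm

/-- For the family `T_0 = "0"`, `T_i = T_{i-1} · c_i · T_{i-1}` with fresh characters `c_i`,
the maximal repeats of `T_i #` are exactly the empty string together with the strings `T_j`
for `0 ≤ j < i`; in particular there are exactly `i + 1` of them, linearly many in `i`. -/
theorem maximalRepeats_of_doubling_family (c : ℕ → ℕ) (f : ℕ → List ℕ) (sent : ℕ) (i : ℕ)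
    (h0 : f 0 = [0]) (hrec : ∀ j, f (j + 1) = f j ++ [c (j + 1)] ++ f j)
    (hinj : ∀ j k, 1 ≤ j → j ≤ i → 1 ≤ k → k ≤ i → c j = c k → j = k)
    (hfresh : ∀ j, 1 ≤ j → j ≤ i → c j ≠ 0 ∧ c j ≠ sent) (hsent : sent ≠ 0) :
    {W : List ℕ | MaximalRepeat W (f i ++ [sent])} =
      insert [] {W : List ℕ | ∃ j, j < i ∧ W = f j} ∧
    {W : List ℕ | MaximalRepeat W (f i ++ [sent])}.ncard = i + 1 := by
  have hflen := flen h0 hrec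
  have hfpre := f_prefix hrec
  have hfsuf := f_suffix hrec
  -- the sentinel-terminated string
  set S : List ℕ := f i ++ [sent] with hSdef
  have hSpre : f i <+: S := List.prefix_append _ _
  have hSlen : S.length = 2^(i+1) := by
    rw [hSdef, List.length_append, hflen i]
    have : (1:ℕ) ≤ 2^(i+1) := Nat.one_le_two_pow
    simp
    omega
  -- easy direction: [] is a maximal repeat
  have emr : MaximalRepeat ([] : List ℕ) S := by
    refine ⟨List.nil_infix, ?_, ?_, ?_⟩
    · unfold numOcc
      rw [List.countP_eq_length.mpr (by intro a _; simp)]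
      rw [List.length_range]
      have : (1:ℕ) ≤ 2^(i+1) := Nat.one_le_two_pow
      omega
    · refine ⟨none, ?_, some 0, ?_, by simp⟩
      · exact List.nil_prefix
      · show [0] <:+: S
        have : f 0 <+: S := (hfpre 0 i (by omega)).trans hSpre
        rw [h0] at this
        exact this.isInfix
    · refine ⟨none, ?_, some sent, ?_, by simp⟩
      · exact List.nil_suffix
      · show [sent] <:+: S
        exact List.IsSuffix.isInfix ⟨f i, rfl⟩
  -- easy direction: each f j (j < i) is a maximal repeat
  have fmr : ∀ j, j < i → MaximalRepeat (f j) S := by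
    intro j hj
    have hfj1 : f j <+: S := (hfpre j i (by omega)).trans hSpre
    have hc1 : 1 ≤ j + 1 := by omega
    have hc2 : j + 1 ≤ i := by omega
    refine ⟨hfj1.isInfix, ?_, ?_, ?_⟩
    · -- occurrences at 0 and (f j).length + 1
      unfold numOcc
      obtain ⟨R, hR⟩ := hfpre (j+1) i (by omega)
      have hdec : S = (f j ++ [c (j+1)]) ++ (f j ++ (R ++ [sent])) := by
        rw [hSdef, ← hR, hrec j]
        simp [List.append_assoc]
      have hocc0 : f j <+: S.drop 0 := by
        rw [List.drop_zero]; exact hfj1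
      have hoccd : f j <+: S.drop ((f j).length + 1) := by
        rw [hdec]
        have : (f j ++ [c (j+1)]).length = (f j).length + 1 := by simp
        rw [List.drop_left' this]
        exact List.prefix_append _ _
      have hlt : (f j).length + 1 < S.length + 1 := by
        have h1 := (hfpre (j+1) i (by omega)).length_le
        rw [hflen (j+1), hflen i] at h1
        rw [hSlen, hflen j]
        have e1 : (2:ℕ)^(j+1+1) = 2 * 2^(j+1) := by ring
        have e2 : (1:ℕ) ≤ 2^(j+1) := Nat.one_le_two_pow
        have e3 : (1:ℕ) ≤ 2^(i+1) := Nat.one_le_two_pow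
        omega
      exact two_le_countP (by omega) (by omega) hlt
        (decide_eq_true hocc0) (decide_eq_true hoccd)
    · -- left maximal : none and c (j+1)
      refine ⟨none, hfj1, some (c (j+1)), ?_, by simp⟩
      show (c (j+1) :: f j) <:+: S
      have hsuf : (c (j+1) :: f j) <:+ f (j+1) := by
        refine ⟨f j, ?_⟩
        rw [hrec j]
        simp
      exact hsuf.isInfix.trans ((hfpre (j+1) i (by omega)).trans hSpre).isInfix
    · -- right maximal : sent and c (j+1)
      refine ⟨some sent, ?_, some (c (j+1)), ?_, ?_⟩
      · show (f j ++ [sent]) <:+: S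
        obtain ⟨t, ht⟩ := hfsuf j i (by omega)
        exact List.IsSuffix.isInfix ⟨t, by rw [hSdef, ← ht]; simp⟩
      · show (f j ++ [c (j+1)]) <:+: S
        have hpre : (f j ++ [c (j+1)]) <+: f (j+1) := by
          refine ⟨f j, ?_⟩
          rw [hrec j]
        exact (hpre.trans ((hfpre (j+1) i (by omega)).trans hSpre)).isInfix
      · simp
        exact fun h => (hfresh (j+1) hc1 hc2).2 h.symm
  -- hard direction
  have hard : ∀ W : List ℕ, MaximalRepeat W S → W = [] ∨ ∃ j, j < i ∧ W = f j := by
    intro W hW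
    obtain ⟨hinf, hocc2, hLmax, hRmax⟩ := hW
    by_cases hWnil : W = []
    · exact Or.inl hWnil
    right
    have hm : 0 < W.length := List.length_pos_iff.mpr hWnil
    set m := W.length with hmdef
    have hN1 : (1:ℕ) ≤ 2^(i+1) := Nat.one_le_two_pow
    have hN2 : (2:ℕ) ≤ 2^(i+1) := by
      calc (2:ℕ) = 2^1 := by norm_num
      _ ≤ 2^(i+1) := Nat.pow_le_pow_right (by norm_num) (by omega)
    -- closed form of S
    have hiS : S = (List.range (2^(i+1))).map
        (fun t => gg c sent i (padicValNat 2 (t+1))) := by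
      rw [hSdef, fclosed (i := i) (sent := sent) h0 hrec i (le_refl i)]
      conv_rhs => rw [show (2:ℕ)^(i+1) = (2^(i+1)-1)+1 from by omega]
      rw [List.range_succ, List.map_append]
      congr 1
      simp only [List.map_cons, List.map_nil]
      congr 1
      rw [show (2^(i+1)-1) + 1 = 2^(i+1) from by omega]
      have hv : padicValNat 2 (2^(i+1)) = i+1 := by
        apply v2_eq dvd_rfl
        intro hd
        have h1 := Nat.le_of_dvd (by positivity) hd
        have h2 : (2:ℕ)^(i+1) < 2^(i+1+1) := Nat.pow_lt_pow_right (by norm_num) (by omega)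
        omega
      rw [hv]
      simp only [gg]
      rw [if_neg (by omega), if_neg (by omega)]
    -- occurrence bounds and characters
    have occ_bound : ∀ (V : List ℕ) (p : ℕ), V ≠ [] → V <+: S.drop p →
        p + V.length ≤ 2^(i+1) := by
      intro V p hV h
      have h1 := h.length_le
      rw [List.length_drop, hSlen] at h1
      have h2 : V.length ≠ 0 := fun hz => hV (List.length_eq_zero_iff.mp hz)
      omega
    have occ_char : ∀ (V : List ℕ) (p t : ℕ), V <+: S.drop p → t < V.length →
        V[t]? = some (gg c sent i (padicValNat 2 (p + t + 1))) := by
      intro V p t h ht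
      obtain ⟨u, hu⟩ := h
      have h1 : V[t]? = (S.drop p)[t]? := by
        rw [← hu, List.getElem?_append_left ht]
      have hb : p + t < 2^(i+1) := by
        have := occ_bound V p (by intro hz; subst hz; simp at ht) ⟨u, hu⟩
        omega
      rw [h1, List.getElem?_drop, hiS, List.getElem?_map, List.getElem?_range hb,
        Option.map_some]
    -- injectivity of gg on [0, i+1]
    have gg_inj : ∀ k l : ℕ, k ≤ i+1 → l ≤ i+1 → gg c sent i k = gg c sent i l → k = l := by
      intro k l hk hl h
      unfold gg at h
      split_ifs at h with h1 h2 h3 h4 h5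
      all_goals try omega
      all_goals first
        | (exact absurd h.symm (hfresh _ (by omega) (by omega)).1)
        | (exact absurd h (hfresh _ (by omega) (by omega)).1)
        | (exact hinj _ _ (by omega) (by omega) (by omega) (by omega) h)
        | (exact absurd h.symm (hfresh _ (by omega) (by omega)).2)
        | (exact absurd h (hfresh _ (by omega) (by omega)).2)
    -- two distinct occurrence positions
    have hocc2' := hocc2
    unfold numOcc at hocc2'
    obtain ⟨p1, p2, hp12, hP1, hP2⟩ := exists_two_of_two_le_countP hocc2'
    simp only [decide_eq_true_eq] at hP1 hP2
    -- pattern equality between occurrences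
    have pat : ∀ q1 q2 t, W <+: S.drop q1 → W <+: S.drop q2 → t < m →
        padicValNat 2 (q1 + t + 1) = padicValNat 2 (q2 + t + 1) := by
      intro q1 q2 t h1 h2 ht
      have e1 := occ_char W q1 t h1 ht
      have e2 := occ_char W q2 t h2 ht
      rw [e1] at e2
      have e3 : gg c sent i (padicValNat 2 (q1+t+1)) = gg c sent i (padicValNat 2 (q2+t+1)) :=
        Option.some.inj e2
      have hb1 : q1 + t + 1 ≤ 2^(i+1) := by
        have := occ_bound W q1 hWnil h1; omega
      have hb2 : q2 + t + 1 ≤ 2^(i+1) := by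
        have := occ_bound W q2 hWnil h2; omega
      have hpw : (2:ℕ)^(i+1) < 2^(i+1+1) := Nat.pow_lt_pow_right (by norm_num) (by omega)
      exact gg_inj _ _ (v2_le (by omega) (by omega)) (v2_le (by omega) (by omega)) e3
    -- the maximal valuation K in the window of the first occurrence
    have hne : (Finset.range m).Nonempty := ⟨0, Finset.mem_range.mpr hm⟩
    obtain ⟨t0, ht0m, ht0⟩ := Finset.exists_mem_eq_sup (α := ℕ) (Finset.range m) hne
      (fun t => padicValNat 2 (p1 + t + 1))
    rw [Finset.mem_range] at ht0m
    obtain ⟨K, ht0v, hKmax⟩ : ∃ K, padicValNat 2 (p1 + t0 + 1) = K ∧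
        ∀ t, t < m → padicValNat 2 (p1 + t + 1) ≤ K :=
      ⟨_, ht0.symm, fun t ht => Finset.le_sup (f := fun t => padicValNat 2 (p1 + t + 1))
        (Finset.mem_range.mpr ht)⟩
    have hM2 : (2:ℕ) ≤ 2^(K+1) := by
      calc (2:ℕ) = 2^1 := by norm_num
      _ ≤ 2^(K+1) := Nat.pow_le_pow_right (by norm_num) (by omega)
    -- all occurrences are congruent mod 2^(K+1)
    have hres : ∀ q, W <+: S.drop q → q % 2^(K+1) = p1 % 2^(K+1) := by
      intro q hq
      have hp := pat p1 q t0 hP1 hq ht0m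
      have hvq : padicValNat 2 (q + t0 + 1) = K := hp ▸ ht0v
      have h1 := v2_mod (x := p1 + t0 + 1) (by omega) ht0v
      have h2 := v2_mod (x := q + t0 + 1) (by omega) hvq
      have hmeq : (q + (t0+1)) % 2^(K+1) = (p1 + (t0+1)) % 2^(K+1) := by
        rw [show q + (t0+1) = q + t0 + 1 from by omega,
          show p1 + (t0+1) = p1 + t0 + 1 from by omega, h1, h2]
      exact Nat.ModEq.add_right_cancel' (t0+1) hmeq
    -- the window is shorter than 2^(K+1)
    have hbound : m < 2^(K+1) := by
      by_contra hc
      push_neg at hc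
      obtain ⟨t', ht'm, hdvd⟩ : ∃ t', t' < m ∧ 2^(K+1) ∣ (p1 + t' + 1) := by
        have hr := Nat.mod_lt (p1+1) (y := 2^(K+1)) (by omega)
        have hkey := Nat.div_add_mod (p1+1) (2^(K+1))
        rcases Nat.eq_zero_or_pos ((p1+1) % 2^(K+1)) with h|h
        · exact ⟨0, by omega, ⟨(p1+1)/2^(K+1), by omega⟩⟩
        · refine ⟨2^(K+1) - (p1+1) % 2^(K+1), by omega, ⟨(p1+1)/2^(K+1) + 1, ?_⟩⟩
          rw [Nat.mul_add, Nat.mul_one]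
          omega
      have hle := hKmax t' ht'm
      have hnd := v2_not_dvd (x := p1 + t' + 1) (by omega)
      exact hnd (dvd_trans (pow_dvd_pow 2 (by omega)) hdvd)
    -- sent does not occur in W
    have hsentW : ∀ t, t < m → W[t]? ≠ some sent := by
      intro t ht hctr
      have key : ∀ q, W <+: S.drop q → q + t + 1 = 2^(i+1) := by
        intro q hq
        have e := occ_char W q t hq ht
        rw [hctr] at e
        have hφ : sent = gg c sent i (padicValNat 2 (q+t+1)) := Option.some.inj e
        have hb := occ_bound W q hWnil hq
        have hpw : (2:ℕ)^(i+1) < 2^(i+1+1) := Nat.pow_lt_pow_right (by norm_num) (by omega)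
        have hvle : padicValNat 2 (q+t+1) ≤ i+1 := v2_le (by omega) (by omega)
        have hgg : gg c sent i (i+1) = sent := by
          simp only [gg]; rw [if_neg (by omega), if_neg (by omega)]
        have hveq : i+1 = padicValNat 2 (q+t+1) :=
          gg_inj _ _ (le_refl _) hvle (by rw [hgg]; exact hφ)
        have hd : 2^(i+1) ∣ q+t+1 := by rw [hveq]; exact pow_padicValNat_dvd
        have := Nat.le_of_dvd (by omega) hd
        omega
      have k1 := key p1 hP1
      have k2 := key p2 hP2
      exact hp12 (by omega)
    -- an infix yields an occurrence
    have infix_occ : ∀ V : List ℕ, V <:+: S → ∃ q, V <+: S.drop q := by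
      rintro V ⟨s, t, hst⟩
      refine ⟨s.length, ?_⟩
      rw [← hst, List.append_assoc, List.drop_left]
      exact ⟨t, rfl⟩
    -- the sentinel extension is not a right extension
    have hnone_r : (none : Option ℕ) ∉ rightExts W S := by
      intro hmem
      have hsuf : W <:+ S := by
        simpa only [rightExts, Set.mem_setOf_eq, Option.elim] using hmem
      obtain ⟨z, hz⟩ := hsuf
      have hzl : z.length + m = 2^(i+1) := by
        have := congrArg List.length hz
        rw [List.length_append, hSlen] at this
        omega
      have h1 : W[m-1]? = S[z.length + (m-1)]? := by
        rw [← hz, List.getElem?_append_right (by omega)]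
        congr 1
        omega
      have h2 : S[z.length + (m-1)]? = some sent := by
        have he : z.length + (m-1) = (f i).length := by
          rw [hflen i]; omega
        rw [hSdef, he, List.getElem?_append_right (le_refl _)]
        simp
      exact hsentW (m-1) (by omega) (by rw [h1, h2])
    -- right maximality forces (p1 + m + 1) ≡ 0 mod 2^(K+1)
    obtain ⟨x, hx, y, hy, hxy⟩ := hRmax
    have getb : ∀ z ∈ rightExts W S, ∃ b q, z = some b ∧ (W ++ [b]) <+: S.drop q := by
      intro z hz
      rcases z with _ | b
      · exact absurd hz hnone_r
      · have hinf' : (W ++ [b]) <:+: S := by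
          simpa only [rightExts, Set.mem_setOf_eq, Option.elim] using hz
        obtain ⟨q, hq⟩ := infix_occ _ hinf'
        exact ⟨b, q, rfl, hq⟩
    obtain ⟨b1, q1, rfl, hq1⟩ := getb x hx
    obtain ⟨b2, q2, rfl, hq2⟩ := getb y hy
    have hb12 : b1 ≠ b2 := fun h => hxy (by rw [h])
    have hs0 : (p1 + m + 1) % 2^(K+1) = 0 := by
      by_contra hs
      have keyR : ∀ b q, (W ++ [b]) <+: S.drop q →
          b = gg c sent i (padicValNat 2 ((p1 + m + 1) % 2^(K+1))) := by
        intro b q hVq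
        have hWq : W <+: S.drop q := (List.prefix_append W [b]).trans hVq
        have hbe := occ_char (W ++ [b]) q m hVq
          (by rw [List.length_append, List.length_singleton]; omega)
        have hbv : (W ++ [b])[m]? = some b := by
          rw [List.getElem?_append_right (by omega : W.length ≤ m), hmdef]
          simp
        rw [hbv] at hbe
        have hbb : b = gg c sent i (padicValNat 2 (q + m + 1)) := Option.some.inj hbe
        have hq' : q % 2^(K+1) = p1 % 2^(K+1) := hres q hWq
        have hmeq : (q + m + 1) % 2^(K+1) = (p1 + m + 1) % 2^(K+1) := by
          have h' : q + (m+1) ≡ p1 + (m+1) [MOD 2^(K+1)] := Nat.ModEq.add_right _ hq'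
          rw [show q + (m+1) = q + m + 1 from by omega,
            show p1 + (m+1) = p1 + m + 1 from by omega] at h'
          exact h'
        have hvv : padicValNat 2 (q + m + 1) =
            padicValNat 2 ((p1 + m + 1) % 2^(K+1)) := by
          rw [v2_of_mod (k := K) (x := q + m + 1) (by rw [hmeq]; omega), hmeq]
        rw [hbb, hvv]
      have c1 := keyR b1 q1 hq1
      have c2 := keyR b2 q2 hq2
      exact hb12 (c1.trans c2.symm)
    -- left maximality forces p1 ≡ 0 mod 2^(K+1)
    have hr0 : p1 % 2^(K+1) = 0 := by
      by_contra hr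
      have keyL : ∀ z ∈ leftExts W S,
          z = some (gg c sent i (padicValNat 2 (p1 % 2^(K+1)))) := by
        intro z hz
        rcases z with _ | d
        · have hpre : W <+: S := by
            simpa only [leftExts, Set.mem_setOf_eq, Option.elim] using hz
          have hocc0 : W <+: S.drop 0 := by rw [List.drop_zero]; exact hpre
          have h00 := hres 0 hocc0
          rw [Nat.zero_mod] at h00
          exact absurd h00.symm hr
        · have hinf' : (d :: W) <:+: S := by
            simpa only [leftExts, Set.mem_setOf_eq, Option.elim] using hz
          obtain ⟨q, hq⟩ := infix_occ _ hinf'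
          obtain ⟨u, hu⟩ := hq
          have hWq : W <+: S.drop (q+1) := by
            refine ⟨u, ?_⟩
            rw [← List.drop_drop, ← hu]
            simp
          have hd : d = gg c sent i (padicValNat 2 (q + 1)) := by
            have h00 := occ_char (d :: W) q 0 ⟨u, hu⟩ (by simp)
            simpa using h00
          have hq' : (q+1) % 2^(K+1) = p1 % 2^(K+1) := hres (q+1) hWq
          have hvv : padicValNat 2 (q+1) = padicValNat 2 (p1 % 2^(K+1)) := by
            rw [v2_of_mod (k := K) (x := q+1) (by rw [hq']; omega), hq']
          rw [hd, hvv]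
      obtain ⟨x', hx', y', hy', hxy'⟩ := hLmax
      exact hxy' ((keyL x' hx').trans (keyL y' hy').symm)
    -- conclude m + 1 = 2^(K+1)
    have hmM : m + 1 = 2^(K+1) := by
      have h1 : (p1 + m + 1) % 2^(K+1) = (m+1) % 2^(K+1) := by
        rw [show p1 + m + 1 = p1 + (m+1) from by omega, Nat.add_mod, hr0]
        simp [Nat.mod_mod_of_dvd]
      have h2 : (m+1) % 2^(K+1) = 0 := by rw [← h1, hs0]
      have h3 : 2^(K+1) ∣ m + 1 := Nat.dvd_of_mod_eq_zero h2
      have h4 := Nat.le_of_dvd (by omega) h3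
      omega
    -- K + 1 ≤ i
    have hKi : K + 1 ≤ i := by
      have hq2' : p2 % 2^(K+1) = 0 := by rw [hres p2 hP2, hr0]
      have hple : ∃ p, 2^(K+1) ≤ p ∧ p + m ≤ 2^(i+1) := by
        rcases Nat.lt_or_ge p1 p2 with h | h
        · refine ⟨p2, ?_, occ_bound W p2 hWnil hP2⟩
          have hd := Nat.dvd_of_mod_eq_zero hq2'
          have := Nat.le_of_dvd (by omega) hd
          omega
        · refine ⟨p1, ?_, occ_bound W p1 hWnil hP1⟩
          have hd := Nat.dvd_of_mod_eq_zero hr0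
          have hp1pos : 0 < p1 := by
            rcases Nat.eq_zero_or_pos p1 with h0' | h0'
            · have hd2 := Nat.dvd_of_mod_eq_zero hq2'
              have := Nat.le_of_dvd (by omega) hd2
              omega
            · exact h0'
          have := Nat.le_of_dvd hp1pos hd
          omega
      obtain ⟨p, hp, hpm⟩ := hple
      by_contra hcon
      push_neg at hcon
      have hmono : (2:ℕ)^(i+1+1) ≤ 2^(K+1+1) := Nat.pow_le_pow_right (by norm_num) (by omega)
      have he1 : (2:ℕ)^(K+1+1) = 2 * 2^(K+1) := by ring
      have he2 : (2:ℕ)^(i+1+1) = 2 * 2^(i+1) := by ring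
      omega
    -- identify W with f K
    refine ⟨K, by omega, ?_⟩
    have hfK := fclosed (i := i) (sent := sent) h0 hrec K (by omega)
    have hfKlen : (f K).length = 2^(K+1) - 1 := hflen K
    apply List.ext_getElem?
    intro t
    by_cases ht : t < m
    · rw [occ_char W p1 t hP1 ht, hfK, List.getElem?_map,
        List.getElem?_range (by omega : t < 2^(K+1)-1), Option.map_some]
      congr 2
      rw [show p1 + t + 1 = p1 + (t+1) from by omega]
      have hle : padicValNat 2 (t+1) ≤ K := v2_le (by omega) (by omega)
      have hdp : 2^(padicValNat 2 (t+1) + 1) ∣ p1 :=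
        dvd_trans (pow_dvd_pow 2 (by omega)) (Nat.dvd_of_mod_eq_zero hr0)
      exact v2_add (by omega) hdp
    · rw [List.getElem?_eq_none (by omega : W.length ≤ t),
        List.getElem?_eq_none (by rw [hfKlen]; omega)]

  -- set equality
  have hset : {W : List ℕ | MaximalRepeat W S} =
      insert [] {W : List ℕ | ∃ j, j < i ∧ W = f j} := by
    ext W
    simp only [Set.mem_setOf_eq, Set.mem_insert_iff]
    constructor
    · exact hard W
    · rintro (rfl | ⟨j, hj, rfl⟩)
      · exact emr
      · exact fmr j hj
  refine ⟨hset, ?_⟩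
  rw [hset]
  have h1 : {W : List ℕ | ∃ j, j < i ∧ W = f j} = f '' (Set.Iio i) := by
    ext W
    simp only [Set.mem_setOf_eq, Set.mem_image, Set.mem_Iio]
    constructor
    · rintro ⟨j, hj, rfl⟩; exact ⟨j, hj, rfl⟩
    · rintro ⟨j, hj, rfl⟩; exact ⟨j, hj, rfl⟩
  rw [h1]
  have hfin : (f '' (Set.Iio i)).Finite := (Set.finite_Iio i).image f
  have hnotmem : ([] : List ℕ) ∉ f '' (Set.Iio i) := by
    rintro ⟨j, _, hfj⟩
    have := hflen j
    rw [hfj] at this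
    have h2 : (1:ℕ) ≤ 2^(j+1) := Nat.one_le_two_pow
    have h3 : (2:ℕ) ≤ 2^(j+1) := by
      calc (2:ℕ) = 2^1 := by norm_num
      _ ≤ 2^(j+1) := Nat.pow_le_pow_right (by norm_num) (by omega)
    simp at this
    omega
  rw [Set.ncard_insert_of_notMem hnotmem hfin]
  have hinjOn : Set.InjOn f (Set.Iio i) := by
    intro j _ k _ h
    have hl := congrArg List.length h
    rw [hflen j, hflen k] at hl
    have e1 : (1:ℕ) ≤ 2^(j+1) := Nat.one_le_two_pow
    have e2 : (1:ℕ) ≤ 2^(k+1) := Nat.one_le_two_pow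
    have : (2:ℕ)^(j+1) = 2^(k+1) := by omega
    have := Nat.pow_right_injective (le_refl 2) this
    omega
  rw [Set.ncard_image_of_injOn hinjOn, ← Finset.coe_Iio, Set.ncard_coe_finset, Nat.card_Iio]
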